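/- Let ‖·‖₁ denote the l¹-norm on ℂ^r, ‖a‖₁ = Σᵢ|aᵢ|. For every k ≥ 1 and every homogeneous polynomial P = Σ_{|α|=k} a_α X^α ∈ ℂ[X₁,…,X_r] of degree k, the projective symmetric norm of P with respect to ‖·‖₁ equals the sum of the absolute values of its coefficients: inf{ Σ_j ∏_{i=1}^k ‖a_{j,i}‖₁ : P = Σ_j l_{j,1}⋯l_{j,k} is a finite sum of products of k linear forms l_{j,i} with coefficient vectors a_{j,i} ∈ ℂ^r } = Σ_{|α|=k} |a_α|. -/

import Mathlib

open scoped BigOperators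

/-- The projective symmetric norm of a degree-`k` homogeneous polynomial with respect to a
norm `N` on `ℂ^r`: infimum of `Σ_j ∏_i N(a_{j,i})` over decompositions
`P = Σ_j l_{j,1} ⋯ l_{j,k}` into finite sums of products of `k` linear forms `l_{j,i}`
with coefficient vectors `a_{j,i} ∈ ℂ^r`. -/
noncomputable def projNorm (r k : ℕ) (N : (Fin r → ℂ) → ℝ) (P : MvPolynomial (Fin r) ℂ) : ℝ :=
  sInf {c : ℝ | ∃ (n : ℕ) (a : Fin n → Fin k → Fin r → ℂ),
    P = ∑ j, ∏ i, (∑ m, MvPolynomial.C (a j i m) * MvPolynomial.X m) ∧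
    c = ∑ j, ∏ i, N (a j i)}

open MvPolynomial

/-- l¹ norm of the coefficients of a multivariate polynomial. -/
noncomputable def coeffL1 {r : ℕ} (P : MvPolynomial (Fin r) ℂ) : ℝ :=
  ∑ α ∈ P.support, ‖P.coeff α‖

lemma coeffL1_nonneg {r : ℕ} (P : MvPolynomial (Fin r) ℂ) : 0 ≤ coeffL1 P :=
  Finset.sum_nonneg fun _ _ => norm_nonneg _

lemma coeffL1_eq_sum {r : ℕ} (P : MvPolynomial (Fin r) ℂ) {S : Finset (Fin r →₀ ℕ)}
    (hS : P.support ⊆ S) : coeffL1 P = ∑ α ∈ S, ‖P.coeff α‖ := by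
  refine Finset.sum_subset hS fun α _ hα => ?_
  rw [notMem_support_iff.mp hα, norm_zero]

lemma coeffL1_add_le {r : ℕ} (P Q : MvPolynomial (Fin r) ℂ) :
    coeffL1 (P + Q) ≤ coeffL1 P + coeffL1 Q := by
  rw [coeffL1_eq_sum (P + Q) (Finset.Subset.trans (support_add) (Finset.Subset.refl _)),
      coeffL1_eq_sum P (Finset.subset_union_left (s₂ := Q.support)),
      coeffL1_eq_sum Q (Finset.subset_union_right (s₁ := P.support)), ← Finset.sum_add_distrib]
  refine Finset.sum_le_sum fun α _ => ?_
  rw [coeff_add]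
  exact norm_add_le _ _

lemma coeffL1_sum_le {r : ℕ} {ι : Type*} (s : Finset ι) (f : ι → MvPolynomial (Fin r) ℂ) :
    coeffL1 (∑ i ∈ s, f i) ≤ ∑ i ∈ s, coeffL1 (f i) := by
  induction s using Finset.cons_induction with
  | empty => simp [coeffL1]
  | cons i s hi ih =>
    rw [Finset.sum_cons, Finset.sum_cons]
    exact (coeffL1_add_le _ _).trans (by linarith)

lemma coeffL1_monomial_le {r : ℕ} (α : Fin r →₀ ℕ) (c : ℂ) :
    coeffL1 (monomial α c) ≤ ‖c‖ := by
  by_cases hc : c = 0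
  · simp [hc, coeffL1]
  · simp [coeffL1, support_monomial, hc]

lemma coeffL1_mul_le {r : ℕ} (P Q : MvPolynomial (Fin r) ℂ) :
    coeffL1 (P * Q) ≤ coeffL1 P * coeffL1 Q := by
  conv_lhs => rw [P.as_sum, Q.as_sum, Finset.sum_mul_sum]
  refine (coeffL1_sum_le _ _).trans ?_
  unfold coeffL1
  rw [Finset.sum_mul]
  refine Finset.sum_le_sum fun β hβ => ?_
  refine (coeffL1_sum_le _ _).trans ?_
  rw [Finset.mul_sum]
  refine Finset.sum_le_sum fun γ hγ => ?_
  rw [monomial_mul]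
  exact (coeffL1_monomial_le _ _).trans (by rw [norm_mul])

lemma coeffL1_prod_le {r : ℕ} {ι : Type*} (s : Finset ι) (f : ι → MvPolynomial (Fin r) ℂ) :
    coeffL1 (∏ i ∈ s, f i) ≤ ∏ i ∈ s, coeffL1 (f i) := by
  induction s using Finset.cons_induction with
  | empty =>
    simp only [Finset.prod_empty]
    simpa using coeffL1_monomial_le (0 : Fin r →₀ ℕ) (1 : ℂ)
  | cons i s hi ih =>
    rw [Finset.prod_cons, Finset.prod_cons]
    refine (coeffL1_mul_le _ _).trans ?_
    exact mul_le_mul le_rfl ih (coeffL1_nonneg _) (coeffL1_nonneg _)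

lemma coeffL1_linear_le {r : ℕ} (a : Fin r → ℂ) :
    coeffL1 (∑ m, MvPolynomial.C (a m) * MvPolynomial.X m) ≤ ∑ m, ‖a m‖ := by
  refine (coeffL1_sum_le _ _).trans (Finset.sum_le_sum fun m _ => ?_)
  rw [C_mul_X_eq_monomial]
  exact coeffL1_monomial_le _ _

/-- Each monomial of degree `k` is a product of `k` variables. -/
lemma exists_prod_X {r k : ℕ} (P : MvPolynomial (Fin r) ℂ) (hP : P.IsHomogeneous k)
    (j' : P.support) :
    ∃ f : Fin k → Fin r,
      (∏ i, (X (f i) : MvPolynomial (Fin r) ℂ)) = monomial (j' : Fin r →₀ ℕ) 1 := by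
  classical
  set α : Fin r →₀ ℕ := (j' : Fin r →₀ ℕ) with hα
  have hdeg : α.degree = k := by
    by_contra h
    exact (mem_support_iff.mp j'.2) (hP.coeff_eq_zero h)
  set L : List (Fin r) := α.toMultiset.toList with hL
  have hlen : L.length = k := by
    rw [hL, Multiset.length_toList, Finsupp.card_toMultiset]
    simpa [Finsupp.degree_apply, Finsupp.sum] using hdeg
  refine ⟨fun i => L.get (Fin.cast hlen.symm i), ?_⟩
  have h1 : (∏ i, (X (L.get (Fin.cast hlen.symm i)) : MvPolynomial (Fin r) ℂ)) =
      ∏ i : Fin L.length, (X (L.get i) : MvPolynomial (Fin r) ℂ) := by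
    refine (Fintype.prod_equiv (finCongr hlen) _ _ fun i => rfl).symm
  simp only [List.get_eq_getElem] at h1 ⊢
  rw [h1, Fin.prod_univ_fun_getElem]
  have h2 : ((L.map X).prod : MvPolynomial (Fin r) ℂ) = (α.toMultiset.map X).prod := by
    rw [← Multiset.prod_coe, ← Multiset.map_coe, hL, Multiset.coe_toList]
  rw [h2, Finset.prod_multiset_map_count]
  rw [monomial_eq, map_one, one_mul, Finsupp.prod]
  refine Finset.prod_congr ?_ fun m hm => ?_
  · rw [Finsupp.toFinset_toMultiset]
  · rw [Finsupp.count_toMultiset]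

/-- For the `l¹`-norm on `ℂ^r`, the projective symmetric norm of a homogeneous polynomial
of degree `k` equals the sum of the absolute values of its coefficients. -/
theorem projNorm_l1_eq_sum_abs_coeff (r k : ℕ) (hk : 1 ≤ k)
    (P : MvPolynomial (Fin r) ℂ) (hP : P.IsHomogeneous k) :
    projNorm r k (fun a => ∑ m, ‖a m‖) P =
      ∑ α ∈ P.support, ‖P.coeff α‖ := by
  classical
  rw [projNorm]
  refine IsLeast.csInf_eq ⟨?_, ?_⟩
  · -- membership : there is a decomposition whose cost is exactly the sum of |coeff|
    set n := P.support.card with hn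
    set e := P.support.equivFin with he
    choose f hf using fun j : Fin n => exists_prod_X P hP (e.symm j)
    set i0 : Fin k := ⟨0, hk⟩ with hi0
    set w : Fin n → Fin k → ℂ :=
      fun j i => if i = i0 then P.coeff (e.symm j : Fin r →₀ ℕ) else 1 with hw
    refine ⟨n, fun j i m => if m = f j i then w j i else 0, ?_, ?_⟩
    · -- the decomposition sums to P
      have hlin : ∀ j i, (∑ m, MvPolynomial.C (if m = f j i then w j i else 0) * X m)
          = MvPolynomial.C (w j i) * X (f j i) := by
        intro j i
        rw [Finset.sum_eq_single (f j i)]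
        · rw [if_pos rfl]
        · intro b _ hb
          rw [if_neg hb, map_zero, zero_mul]
        · intro h
          exact absurd (Finset.mem_univ _) h
      have hprod : ∀ j : Fin n, (∏ i, (MvPolynomial.C (w j i) * X (f j i)))
          = monomial (e.symm j : Fin r →₀ ℕ) (P.coeff (e.symm j : Fin r →₀ ℕ)) := by
        intro j
        rw [Finset.prod_mul_distrib, ← map_prod, hf j, hw]
        simp only []
        rw [Finset.prod_ite_eq' Finset.univ i0 (fun _ => P.coeff (e.symm j : Fin r →₀ ℕ)),
          if_pos (Finset.mem_univ _)]
        rw [monomial_eq, monomial_eq, map_one, one_mul]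
      calc P = ∑ v ∈ P.support, monomial v (P.coeff v) := P.as_sum
        _ = ∑ v : P.support, monomial (v : Fin r →₀ ℕ) (P.coeff v) :=
            (P.support.sum_coe_sort _).symm
        _ = ∑ j : Fin n, monomial (e.symm j : Fin r →₀ ℕ) (P.coeff (e.symm j : Fin r →₀ ℕ)) :=
            (Equiv.sum_comp e.symm _).symm
        _ = ∑ j, ∏ i, (∑ m, MvPolynomial.C (if m = f j i then w j i else 0) * X m) := by
            refine Finset.sum_congr rfl fun j _ => ?_
            rw [← hprod j]
            exact (Finset.prod_congr rfl fun i _ => hlin j i).symm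
    · -- the cost equals the sum of |coeff|
      have hcost : ∀ j : Fin n, (∏ i, ∑ m, ‖if m = f j i then w j i else 0‖)
          = ‖P.coeff (e.symm j : Fin r →₀ ℕ)‖ := by
        intro j
        have h1 : ∀ i, (∑ m, ‖if m = f j i then w j i else 0‖)
            = ‖w j i‖ := by
          intro i
          have : ∀ m, ‖if m = f j i then w j i else 0‖
              = if m = f j i then ‖w j i‖ else 0 := by
            intro m; split <;> simp
          simp only [this]
          rw [Finset.sum_ite_eq' Finset.univ (f j i) (fun _ => ‖w j i‖),
            if_pos (Finset.mem_univ _)]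
        simp only [h1]
        simp only [hw]
        have : ∀ i, ‖if i = i0 then P.coeff (e.symm j : Fin r →₀ ℕ) else 1‖
            = if i = i0 then ‖P.coeff (e.symm j : Fin r →₀ ℕ)‖ else 1 := by
          intro i; split <;> simp
        simp only [this]
        rw [Finset.prod_ite_eq' Finset.univ i0
            (fun _ => ‖P.coeff (e.symm j : Fin r →₀ ℕ)‖),
          if_pos (Finset.mem_univ _)]
      calc (∑ α ∈ P.support, ‖P.coeff α‖)
          = ∑ v : P.support, ‖P.coeff v‖ := (P.support.sum_coe_sort _).symm
        _ = ∑ j : Fin n, ‖P.coeff (e.symm j : Fin r →₀ ℕ)‖ :=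
            (Equiv.sum_comp e.symm _).symm
        _ = ∑ j, ∏ i, ∑ m, ‖if m = f j i then w j i else 0‖ :=
            (Finset.sum_congr rfl fun j _ => (hcost j)).symm
  · -- lower bound
    rintro c ⟨n, a, hPeq, rfl⟩
    have h1 : (∑ α ∈ P.support, ‖P.coeff α‖) = coeffL1 P := rfl
    rw [h1, hPeq]
    refine (coeffL1_sum_le _ _).trans (Finset.sum_le_sum fun j _ => ?_)
    refine (coeffL1_prod_le _ _).trans (Finset.prod_le_prod
      (fun i _ => coeffL1_nonneg _) fun i _ => coeffL1_linear_le _)
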